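/- Let n, V, H be positive integers, let E ∈ [−1,1]^{H×n} be a matrix with columns e⁽¹⁾,…,e⁽ⁿ⁾ ∈ [−1,1]^H, and let B ∈ ℝ^{V×H} have rows b_1,…,b_V ∈ ℝ^H. Assume the feasible set is nonempty: there exists X ∈ [−1,1]^{V×n} with rows x_1,…,x_V ∈ [−1,1]^n satisfying (1/n)·E·x_v = b_v for every v ∈ {1,…,V}. Then the minimax value inf over reconstructions X̃ ∈ (−1,1)^{V×n} of the supremum over feasible X ∈ [−1,1]^{V×n} (those with (1/n)·E·x_v = b_v for all v) of the average cross-entropy loss (1/n)·Σ_{i=1}^n ℓ(x⁽ⁱ⁾, x̃⁽ⁱ⁾) equals (1/2)·Σ_{v=1}^V inf_{w ∈ ℝ^H} γ^E(w, b_v). -/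

import Mathlib

open Topology Filter

/-- The potential well `Ψ(m) = ln(1+eᵐ) + ln(1+e⁻ᵐ)`. -/
noncomputable def Psi (m : ℝ) : ℝ := Real.log (1 + Real.exp m) + Real.log (1 + Real.exp (-m))

/-- Cross-entropy reconstruction loss between `x ∈ [-1,1]^V` and `x̃ ∈ (-1,1)^V`. -/
noncomputable def xent {V : ℕ} (x xt : Fin V → ℝ) : ℝ :=
  ∑ v, ((1 + x v) / 2 * Real.log (2 / (1 + xt v)) + (1 - x v) / 2 * Real.log (2 / (1 - xt v)))

/-- The bitwise slack function `γ^E(w, b) = -bᵀw + (1/n)·Σᵢ Ψ(wᵀe⁽ⁱ⁾)`. -/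
noncomputable def slack {n H : ℕ} (E : Fin H → Fin n → ℝ) (w b : Fin H → ℝ) : ℝ :=
  -(∑ h, b h * w h) + (1 / (n : ℝ)) * ∑ i, Psi (∑ h, w h * E h i)

/-- `th m = tanh(m/2)`. -/
noncomputable def th (m : ℝ) : ℝ := (Real.exp m - 1) / (Real.exp m + 1)

/-- binary entropy of a `[-1,1]`-valued bit. -/
noncomputable def ent (x : ℝ) : ℝ := Real.negMulLog ((1 + x) / 2) + Real.negMulLog ((1 - x) / 2)

lemma exp_add_one_pos (m : ℝ) : (0:ℝ) < Real.exp m + 1 := by positivity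

lemma th_mem (m : ℝ) : th m ∈ Set.Ioo (-1 : ℝ) 1 := by
  have h := exp_add_one_pos m
  unfold th
  constructor
  · rw [lt_div_iff₀ h]; nlinarith [Real.exp_pos m]
  · rw [div_lt_one h]; nlinarith [Real.exp_pos m]

lemma abs_le_Psi (m : ℝ) : |m| ≤ Psi m := by
  have h1 : m ≤ Real.log (1 + Real.exp m) := by
    calc m = Real.log (Real.exp m) := (Real.log_exp m).symm
    _ ≤ _ := Real.log_le_log (Real.exp_pos m) (by linarith)
  have h2 : -m ≤ Real.log (1 + Real.exp (-m)) := by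
    calc -m = Real.log (Real.exp (-m)) := (Real.log_exp _).symm
    _ ≤ _ := Real.log_le_log (Real.exp_pos _) (by linarith)
  have h3 : 0 ≤ Real.log (1 + Real.exp m) := Real.log_nonneg (by nlinarith [Real.exp_pos m])
  have h4 : 0 ≤ Real.log (1 + Real.exp (-m)) := Real.log_nonneg (by nlinarith [Real.exp_pos (-m)])
  rw [abs_le]; unfold Psi; constructor <;> linarith

lemma Psi_nonneg (m : ℝ) : 0 ≤ Psi m := le_trans (abs_nonneg m) (abs_le_Psi m)

lemma Psi_zero : Psi 0 = 2 * Real.log 2 := by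
  unfold Psi; norm_num; ring

/-- key identity: `Psi m - m * th m = 2 * ent (th m)`. -/
lemma Psi_sub_eq (m : ℝ) : Psi m - m * th m = 2 * ent (th m) := by
  have hs := Real.exp_pos m
  set s := Real.exp m with hsdef
  have h1 : (1 + th m) / 2 = s / (s + 1) := by
    unfold th; rw [← hsdef]; field_simp; ring
  have h2 : (1 - th m) / 2 = 1 / (s + 1) := by
    unfold th; rw [← hsdef]; field_simp; ring
  have hL : Real.log (s / (s + 1)) = m - Real.log (s + 1) := by
    rw [Real.log_div (ne_of_gt hs) (by positivity), hsdef, Real.log_exp]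
  have hL2 : Real.log (1 / (s + 1)) = -Real.log (s + 1) := by
    rw [Real.log_div one_ne_zero (by positivity), Real.log_one]; ring
  have hPsi : Psi m = 2 * Real.log (s + 1) - m := by
    unfold Psi
    have : Real.exp (-m) = 1 / s := by rw [Real.exp_neg, ← hsdef, one_div]
    rw [this, ← hsdef]
    have e1 : 1 + s = s + 1 := by ring
    have e2 : (1:ℝ) + 1 / s = (s + 1) / s := by field_simp
    rw [e1, e2, Real.log_div (by positivity) (ne_of_gt hs), hsdef, Real.log_exp]
    ring
  unfold ent Real.negMulLog
  rw [h1, h2, hL, hL2, hPsi]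
  have hth : th m = (s - 1) / (s + 1) := by unfold th; rw [← hsdef]
  rw [hth]
  field_simp
  ring

/-- xent per-coordinate identity at `t = th m`. -/
lemma xent_coord_id (m x : ℝ) :
    (1 + x) / 2 * Real.log (2 / (1 + th m)) + (1 - x) / 2 * Real.log (2 / (1 - th m))
      = (Psi m - x * m) / 2 := by
  have hs := Real.exp_pos m
  set s := Real.exp m with hsdef
  have h1 : 2 / (1 + th m) = (s + 1) / s := by
    unfold th; rw [← hsdef]; rw [div_eq_div_iff] <;> [skip; skip; positivity]
    · field_simp; ring
    · have := th_mem m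
      unfold th at this; rw [← hsdef] at this
      nlinarith [this.1]
  have h2 : 2 / (1 - th m) = s + 1 := by
    unfold th; rw [← hsdef]
    rw [div_eq_iff]
    · field_simp; ring
    · have := th_mem m; unfold th at this; rw [← hsdef] at this; nlinarith [this.2]
  have hPsi : Psi m = 2 * Real.log (s + 1) - m := by
    unfold Psi
    have : Real.exp (-m) = 1 / s := by rw [Real.exp_neg, ← hsdef, one_div]
    rw [this, ← hsdef]
    have e2 : (1:ℝ) + 1 / s = (s + 1) / s := by field_simp
    rw [show (1:ℝ) + s = s + 1 by ring, e2, Real.log_div (by positivity) (ne_of_gt hs), hsdef,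
      Real.log_exp]
    ring
  rw [h1, h2, hPsi, Real.log_div (by positivity) (ne_of_gt hs), hsdef, Real.log_exp]
  ring

/-- Gibbs-type pointwise inequality. -/
lemma gibbs_coord {x t : ℝ} (hx : x ∈ Set.Icc (-1:ℝ) 1) (ht : t ∈ Set.Ioo (-1:ℝ) 1) :
    ent x ≤ (1 + x) / 2 * Real.log (2 / (1 + t)) + (1 - x) / 2 * Real.log (2 / (1 - t)) := by
  obtain ⟨hx1, hx2⟩ := hx
  obtain ⟨ht1, ht2⟩ := ht
  -- p log p - p log pt ≥ p - pt
  have key : ∀ p pt : ℝ, 0 ≤ p → 0 < pt →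
      p - pt ≤ p * Real.log p - p * Real.log pt := by
    intro p pt hp hpt
    rcases eq_or_lt_of_le hp with h | h
    · simp [← h]; positivity
    · have hlog := Real.log_le_sub_one_of_pos (show 0 < pt / p by positivity)
      rw [Real.log_div (ne_of_gt hpt) (ne_of_gt h)] at hlog
      have := mul_le_mul_of_nonneg_left hlog (le_of_lt h)
      rw [mul_sub] at this
      have hppos : p * (pt / p) = pt := by field_simp
      nlinarith
  have k1 := key ((1 + x)/2) ((1 + t)/2) (by linarith) (by linarith)
  have k2 := key ((1 - x)/2) ((1 - t)/2) (by linarith) (by linarith)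
  have l1 : Real.log (2 / (1 + t)) = -Real.log ((1 + t)/2) := by
    rw [← Real.log_inv]; norm_num
  have l2 : Real.log (2 / (1 - t)) = -Real.log ((1 - t)/2) := by
    rw [← Real.log_inv]; norm_num
  unfold ent Real.negMulLog
  rw [l1, l2]
  nlinarith [k1, k2]

lemma hasDerivAt_Psi (m : ℝ) : HasDerivAt Psi (th m) m := by
  have h1 : HasDerivAt (fun m : ℝ => Real.log (1 + Real.exp m))
      (Real.exp m / (1 + Real.exp m)) m := by
    have := ((Real.hasDerivAt_exp m).const_add 1).log (by positivity)
    simpa using this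
  have h2 : HasDerivAt (fun m : ℝ => Real.log (1 + Real.exp (-m)))
      (-Real.exp (-m) / (1 + Real.exp (-m))) m := by
    have hneg : HasDerivAt (fun m : ℝ => -m) (-1) m := (hasDerivAt_id m).neg
    have hexp : HasDerivAt (fun m : ℝ => Real.exp (-m)) (Real.exp (-m) * (-1)) m :=
      (Real.hasDerivAt_exp (-m)).comp m hneg
    have := (hexp.const_add 1).log (by positivity)
    simpa [mul_comm, neg_div] using this
  have h := h1.add h2
  have : Real.exp m / (1 + Real.exp m) + -Real.exp (-m) / (1 + Real.exp (-m)) = th m := by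
    rw [Real.exp_neg]
    have hs := Real.exp_pos m
    unfold th
    field_simp
    ring
  rw [this] at h
  exact h

lemma continuous_Psi : Continuous Psi := by
  have h1 : Continuous fun m : ℝ => Real.log (1 + Real.exp m) :=
    (continuous_const.add Real.continuous_exp).log fun x => (by positivity : (0:ℝ) < 1 + Real.exp x).ne'
  have h2 : Continuous fun m : ℝ => Real.log (1 + Real.exp (-m)) :=
    (continuous_const.add (Real.continuous_exp.comp continuous_neg)).log fun x => (by positivity : (0:ℝ) < 1 + Real.exp (-x)).ne'
  exact h1.add h2

lemma continuous_slack {n H : ℕ} (E : Fin H → Fin n → ℝ) (b : Fin H → ℝ) :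
    Continuous fun w : Fin H → ℝ => slack E w b := by
  unfold slack
  refine Continuous.add ?_ ?_
  · exact (continuous_finset_sum _ fun h _ => (continuous_const.mul (continuous_apply h))).neg
  · refine continuous_const.mul (continuous_finset_sum _ fun i _ => ?_)
    exact continuous_Psi.comp (continuous_finset_sum _ fun h _ => (continuous_apply h).mul continuous_const)

/-- derivative of the perturbed regularized slack along coordinate `h₀`. -/
lemma hasDerivAt_pert {n H : ℕ} (E : Fin H → Fin n → ℝ) (b w : Fin H → ℝ) (δ : ℝ)
    (h₀ : Fin H) :
    HasDerivAt (fun s : ℝ =>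
        slack E (fun h => w h + s * (if h = h₀ then 1 else 0)) b
          + δ * ∑ h, (w h + s * (if h = h₀ then 1 else 0))^2)
      (-(b h₀) + (1 / (n : ℝ)) * (∑ i, th (∑ h, w h * E h i) * E h₀ i) + δ * (2 * w h₀)) 0 := by
  have esum : ∀ (s : ℝ) (c : Fin H → ℝ),
      ∑ h, c h * (w h + s * (if h = h₀ then 1 else 0)) = (∑ h, c h * w h) + s * c h₀ := by
    intro s c
    simp [mul_add, Finset.sum_add_distrib, mul_ite, mul_comm, mul_left_comm]
  have hfun : (fun s : ℝ =>
      slack E (fun h => w h + s * (if h = h₀ then 1 else 0)) b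
        + δ * ∑ h, (w h + s * (if h = h₀ then 1 else 0))^2)
      = fun s : ℝ =>
        (-((∑ h, b h * w h) + s * b h₀)
        + (1 / (n : ℝ)) * ∑ i, Psi ((∑ h, w h * E h i) + s * E h₀ i))
        + δ * ∑ h, (w h + s * (if h = h₀ then 1 else 0))^2 := by
    funext s
    unfold slack
    congr 2
    · exact congrArg Neg.neg (esum s b)
    · refine congrArg _ (Finset.sum_congr rfl fun i _ => congrArg Psi ?_)
      have := esum s (fun h => E h i)
      simpa [mul_comm] using this
  rw [hfun]
  have hA : HasDerivAt (fun s : ℝ => -((∑ h, b h * w h) + s * b h₀)) (-(b h₀)) 0 := by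
    exact ((((hasDerivAt_id (0:ℝ)).mul_const (b h₀)).const_add (∑ h, b h * w h)).neg).congr_deriv (by simp)
  have hB : HasDerivAt (fun s : ℝ => (1 / (n : ℝ)) * ∑ i, Psi ((∑ h, w h * E h i) + s * E h₀ i))
      ((1 / (n : ℝ)) * (∑ i, th (∑ h, w h * E h i) * E h₀ i)) 0 := by
    refine HasDerivAt.const_mul _ (HasDerivAt.fun_sum fun i _ => ?_)
    have hin : HasDerivAt (fun s : ℝ => (∑ h, w h * E h i) + s * E h₀ i) (E h₀ i) 0 := by
      simpa using ((hasDerivAt_id (0:ℝ)).mul_const (E h₀ i)).const_add (∑ h, w h * E h i)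
    have := (hasDerivAt_Psi ((∑ h, w h * E h i) + 0 * E h₀ i)).comp 0 hin
    simpa [mul_comm, Function.comp_def] using this
  have hC : HasDerivAt (fun s : ℝ => δ * ∑ h, (w h + s * (if h = h₀ then 1 else 0))^2)
      (δ * (2 * w h₀)) 0 := by
    have hsum : HasDerivAt (fun s : ℝ => ∑ h, (w h + s * (if h = h₀ then 1 else 0))^2)
        (∑ h, 2 * (w h + 0 * (if h = h₀ then 1 else 0)) * (if h = h₀ then 1 else 0)) 0 := by
      refine HasDerivAt.fun_sum fun h _ => ?_
      have hin : HasDerivAt (fun s : ℝ => w h + s * (if h = h₀ then 1 else 0))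
          ((if h = h₀ then 1 else 0)) 0 := by
        simpa using ((hasDerivAt_id (0:ℝ)).mul_const (if h = h₀ then (1:ℝ) else 0)).const_add (w h)
      have := hin.fun_pow 2
      simpa [mul_comm, mul_left_comm] using this
    have : (∑ h, 2 * (w h + 0 * (if h = h₀ then 1 else 0)) * (if h = h₀ then 1 else 0))
        = 2 * w h₀ := by
      simp [mul_ite]
    rw [this] at hsum
    exact hsum.const_mul δ
  exact (hA.add hB).add hC

lemma continuous_ent : Continuous ent := by
  unfold ent
  exact (Real.continuous_negMulLog.comp (by continuity)).add
    (Real.continuous_negMulLog.comp (by continuity))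

lemma sum_swap_dot {n H : ℕ} (E : Fin H → Fin n → ℝ) (w : Fin H → ℝ) (x : Fin n → ℝ) :
    ∑ h, (∑ i, E h i * x i) * w h = ∑ i, (∑ h, w h * E h i) * x i := by
  simp only [Finset.sum_mul]
  rw [Finset.sum_comm]
  exact Finset.sum_congr rfl fun i _ => Finset.sum_congr rfl fun h _ => by ring

lemma slack_feas_eq {n H : ℕ} (E : Fin H → Fin n → ℝ) (b w : Fin H → ℝ) (x : Fin n → ℝ)
    (hfe : ∀ h, (1 / (n : ℝ)) * ∑ i, E h i * x i = b h) :
    slack E w b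
      = (1 / (n : ℝ)) * ∑ i, (Psi (∑ h, w h * E h i) - (∑ h, w h * E h i) * x i) := by
  unfold slack
  have hb : ∑ h, b h * w h = (1 / (n : ℝ)) * ∑ i, (∑ h, w h * E h i) * x i := by
    rw [← sum_swap_dot E w x, Finset.mul_sum]
    exact Finset.sum_congr rfl fun h _ => by rw [← hfe h]; ring
  rw [hb, Finset.sum_sub_distrib, mul_sub]
  ring

lemma slack_nonneg {n H : ℕ} (E : Fin H → Fin n → ℝ) (b w : Fin H → ℝ) (x : Fin n → ℝ)
    (hx : ∀ i, x i ∈ Set.Icc (-1 : ℝ) 1)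
    (hfe : ∀ h, (1 / (n : ℝ)) * ∑ i, E h i * x i = b h) :
    0 ≤ slack E w b := by
  rw [slack_feas_eq E b w x hfe]
  have : ∀ i : Fin n, 0 ≤ Psi (∑ h, w h * E h i) - (∑ h, w h * E h i) * x i := by
    intro i
    set m := ∑ h, w h * E h i
    have h1 : m * x i ≤ |m| := by
      calc m * x i ≤ |m * x i| := le_abs_self _
      _ = |m| * |x i| := abs_mul _ _
      _ ≤ |m| * 1 := by
          have := abs_le.mpr ⟨(hx i).1, (hx i).2⟩
          exact mul_le_mul_of_nonneg_left this (abs_nonneg m)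
      _ = |m| := mul_one _
    linarith [abs_le_Psi m]
  exact mul_nonneg (by positivity) (Finset.sum_nonneg fun i _ => this i)

lemma bddBelow_slack {n H : ℕ} (E : Fin H → Fin n → ℝ) (b : Fin H → ℝ) (x : Fin n → ℝ)
    (hx : ∀ i, x i ∈ Set.Icc (-1 : ℝ) 1)
    (hfe : ∀ h, (1 / (n : ℝ)) * ∑ i, E h i * x i = b h) :
    BddBelow (Set.range fun w : Fin H → ℝ => slack E w b) := by
  refine ⟨0, fun y hy => ?_⟩
  obtain ⟨w, rfl⟩ := hy
  exact slack_nonneg E b w x hx hfe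

/-- existence of a global minimizer of the regularized slack. -/
lemma exists_min {n H : ℕ} (hn : 0 < n) (E : Fin H → Fin n → ℝ) (b : Fin H → ℝ)
    (x0 : Fin n → ℝ) (hx0 : ∀ i, x0 i ∈ Set.Icc (-1 : ℝ) 1)
    (hfe : ∀ h, (1 / (n : ℝ)) * ∑ i, E h i * x0 i = b h)
    {δ : ℝ} (hδ : 0 < δ) :
    ∃ w : Fin H → ℝ, ∀ w' : Fin H → ℝ,
      slack E w b + δ * ∑ h, (w h)^2 ≤ slack E w' b + δ * ∑ h, (w' h)^2 := by
  set ψ : (Fin H → ℝ) → ℝ := fun w => slack E w b + δ * ∑ h, (w h)^2 with hψ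
  have hcont : Continuous ψ := by
    refine (continuous_slack E b).add (continuous_const.mul ?_)
    exact continuous_finset_sum _ fun h _ => (continuous_apply h).pow 2
  set R : ℝ := Real.sqrt (2 * Real.log 2 / δ) with hR
  have hRnn : 0 ≤ R := Real.sqrt_nonneg _
  set S : Set (Fin H → ℝ) := Set.pi Set.univ (fun _ => Set.Icc (-R) R) with hS
  have hScomp : IsCompact S := isCompact_univ_pi fun _ => isCompact_Icc
  have hS0 : (0 : Fin H → ℝ) ∈ S := by
    intro h _
    simp only [Pi.zero_apply, Set.mem_Icc]
    exact ⟨by linarith, hRnn⟩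
  obtain ⟨w, hwS, hwmin'⟩ := hScomp.exists_isMinOn ⟨0, hS0⟩ hcont.continuousOn
  have hwmin : ∀ w' ∈ S, ψ w ≤ ψ w' := fun w' hw' => hwmin' hw'
  refine ⟨w, fun w' => ?_⟩
  by_cases hw' : w' ∈ S
  · exact hwmin w' hw'
  · -- outside S the value exceeds ψ 0
    have hψ0 : ψ 0 = 2 * Real.log 2 := by
      simp only [hψ]
      unfold slack
      simp [Psi_zero]
      field_simp
    obtain ⟨h₀, hh₀⟩ : ∃ h₀, R < |w' h₀| := by
      by_contra hcon
      push_neg at hcon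
      exact hw' fun h _ => abs_le.mp (hcon h)
    have h1 : 2 * Real.log 2 / δ < (w' h₀)^2 := by
      have : R^2 < (w' h₀)^2 := by
        have := sq_lt_sq' (by linarith [abs_nonneg (w' h₀), neg_abs_le (w' h₀)] : -|w' h₀| < R) hh₀
        calc R^2 < |w' h₀|^2 := by nlinarith [abs_nonneg (w' h₀)]
        _ = (w' h₀)^2 := sq_abs _
      rwa [hR, Real.sq_sqrt (by positivity)] at this
    have h2 : (w' h₀)^2 ≤ ∑ h, (w' h)^2 :=
      Finset.single_le_sum (fun h _ => sq_nonneg (w' h)) (Finset.mem_univ h₀)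
    have h3 : 2 * Real.log 2 < ψ w' := by
      have hs := slack_nonneg E b w' x0 hx0 hfe
      have : 2 * Real.log 2 / δ < ∑ h, (w' h)^2 := lt_of_lt_of_le h1 h2
      have := (div_lt_iff₀ hδ).mp this
      simp only [hψ]
      nlinarith
    calc ψ w ≤ ψ 0 := hwmin 0 hS0
    _ = 2 * Real.log 2 := hψ0
    _ ≤ ψ w' := le_of_lt h3

lemma crux {n H : ℕ} (hn : 0 < n) (E : Fin H → Fin n → ℝ) (b : Fin H → ℝ)
    (x0 : Fin n → ℝ) (hx0 : ∀ i, x0 i ∈ Set.Icc (-1:ℝ) 1)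
    (hfe : ∀ h, (1/(n:ℝ)) * ∑ i, E h i * x0 i = b h) :
    ∃ x : Fin n → ℝ, (∀ i, x i ∈ Set.Icc (-1:ℝ) 1) ∧
      (∀ h, (1/(n:ℝ)) * ∑ i, E h i * x i = b h) ∧
      (⨅ w : Fin H → ℝ, slack E w b) ≤ (1/(n:ℝ)) * ∑ i, 2 * ent (x i) := by
  have hδpos : ∀ k : ℕ, (0:ℝ) < 1/(k+1:ℝ) := fun k => by positivity
  have hmin : ∀ k : ℕ, ∃ w : Fin H → ℝ, ∀ w',
      slack E w b + (1/(k+1:ℝ)) * ∑ h, (w h)^2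
        ≤ slack E w' b + (1/(k+1:ℝ)) * ∑ h, (w' h)^2 :=
    fun k => exists_min hn E b x0 hx0 hfe (hδpos k)
  choose W hW using hmin
  -- first-order conditions
  have foc : ∀ (k : ℕ) (h₀ : Fin H),
      (1/(n:ℝ)) * ∑ i, E h₀ i * th (∑ h, W k h * E h i)
        = b h₀ - (1/(k+1:ℝ)) * (2 * W k h₀) := by
    intro k h₀
    have hloc : IsLocalMin (fun s : ℝ =>
        slack E (fun h => W k h + s * (if h = h₀ then 1 else 0)) b
          + (1/(k+1:ℝ)) * ∑ h, (W k h + s * (if h = h₀ then 1 else 0))^2) 0 :=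
      Filter.Eventually.of_forall fun s => by
        simpa using hW k (fun h => W k h + s * (if h = h₀ then 1 else 0))
    have hzero := hloc.hasDerivAt_eq_zero (hasDerivAt_pert E b (W k) (1/(k+1:ℝ)) h₀)
    have hswap : ∑ i, th (∑ h, W k h * E h i) * E h₀ i
        = ∑ i, E h₀ i * th (∑ h, W k h * E h i) :=
      Finset.sum_congr rfl fun i _ => mul_comm _ _
    rw [hswap] at hzero
    linarith
  -- value bound
  have value : ∀ k : ℕ, slack E (W k) b
      ≤ (1/(n:ℝ)) * ∑ i, 2 * ent (th (∑ h, W k h * E h i)) := by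
    intro k
    have hb : ∑ h, b h * W k h
        = (1/(n:ℝ)) * ∑ i, (∑ h, W k h * E h i) * th (∑ h, W k h * E h i)
          + (1/(k+1:ℝ)) * 2 * ∑ h, (W k h)^2 := by
      have hbh : ∀ h, b h = (1/(n:ℝ)) * ∑ i, E h i * th (∑ h', W k h' * E h' i)
          + (1/(k+1:ℝ)) * (2 * W k h) := by
        intro h; have := foc k h; linarith
      calc ∑ h, b h * W k h
          = ∑ h, (((1/(n:ℝ)) * ∑ i, E h i * th (∑ h', W k h' * E h' i)) * W k h
            + (1/(k+1:ℝ)) * (2 * W k h) * W k h) := by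
            exact Finset.sum_congr rfl fun h _ => by rw [hbh h]; ring
        _ = (1/(n:ℝ)) * ∑ h, (∑ i, E h i * th (∑ h', W k h' * E h' i)) * W k h
            + (1/(k+1:ℝ)) * 2 * ∑ h, (W k h)^2 := by
            rw [Finset.sum_add_distrib, Finset.mul_sum, Finset.mul_sum]
            congr 1
            · exact Finset.sum_congr rfl fun h _ => by ring
            · exact Finset.sum_congr rfl fun h _ => by ring
        _ = _ := by rw [sum_swap_dot E (W k) (fun i => th (∑ h', W k h' * E h' i))]
    have hslack : slack E (W k) b
        = (1/(n:ℝ)) * ∑ i, (Psi (∑ h, W k h * E h i)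
            - (∑ h, W k h * E h i) * th (∑ h, W k h * E h i))
          - (1/(k+1:ℝ)) * 2 * ∑ h, (W k h)^2 := by
      unfold slack
      rw [hb, Finset.sum_sub_distrib, mul_sub]
      ring
    have hent : (∑ i, (Psi (∑ h, W k h * E h i)
        - (∑ h, W k h * E h i) * th (∑ h, W k h * E h i)))
        = ∑ i, 2 * ent (th (∑ h, W k h * E h i)) :=
      Finset.sum_congr rfl fun i _ => Psi_sub_eq _
    have hnn : (0:ℝ) ≤ (1/(k+1:ℝ)) * 2 * ∑ h, (W k h)^2 := by positivity
    rw [hslack, hent]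
    linarith
  -- norm bound on the minimizers
  have hWbound : ∀ (k : ℕ) (h : Fin H), (W k h)^2 ≤ 2 * Real.log 2 * (k+1:ℝ) := by
    intro k h
    have h0 : slack E 0 b + (1/(k+1:ℝ)) * ∑ h : Fin H, ((0:Fin H → ℝ) h)^2
        = 2 * Real.log 2 := by
      unfold slack
      simp [Psi_zero]
      field_simp
    have h1 := hW k 0
    rw [h0] at h1
    have h2 := slack_nonneg E b (W k) x0 hx0 hfe
    have h3 : (W k h)^2 ≤ ∑ h', (W k h')^2 :=
      Finset.single_le_sum (fun h' _ => sq_nonneg (W k h')) (Finset.mem_univ h)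
    have h4 : (1/(k+1:ℝ)) * ∑ h', (W k h')^2 ≤ 2 * Real.log 2 := by linarith
    have h5 : ∑ h', (W k h')^2 ≤ 2 * Real.log 2 * (k+1:ℝ) := by
      rw [div_mul_eq_mul_div, one_mul, div_le_iff₀ (by positivity : (0:ℝ) < (k+1:ℝ))] at h4
      linarith
    linarith
  -- the constraint error tends to zero
  have herr : ∀ h : Fin H, Filter.Tendsto (fun k : ℕ => (1/(k+1:ℝ)) * (2 * W k h))
      Filter.atTop (𝓝 0) := by
    intro h
    apply squeeze_zero_norm (a := fun k : ℕ => 2 * Real.sqrt (2 * Real.log 2 / ((k:ℝ)+1)))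
    · intro k
      have hb := hWbound k h
      have habs : |W k h| ≤ Real.sqrt (2 * Real.log 2 * ((k:ℝ)+1)) := by
        rw [← Real.sqrt_sq_eq_abs]
        exact Real.sqrt_le_sqrt hb
      have hnorm : ‖(1/((k:ℝ)+1)) * (2 * W k h)‖ = (1/((k:ℝ)+1)) * (2 * |W k h|) := by
        rw [Real.norm_eq_abs, abs_mul, abs_mul]
        congr 2
        · rw [abs_of_pos (hδpos k)]
        · rw [abs_of_pos (by norm_num : (0:ℝ) < 2)]
      have hsq : Real.sqrt (2 * Real.log 2 / ((k:ℝ)+1))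
          = Real.sqrt (2 * Real.log 2 * ((k:ℝ)+1)) / ((k:ℝ)+1) := by
        have e : 2 * Real.log 2 / ((k:ℝ)+1)
            = (2 * Real.log 2 * ((k:ℝ)+1)) / ((k:ℝ)+1)^2 := by
          field_simp
        rw [e, Real.sqrt_div (by positivity), Real.sqrt_sq (by positivity)]
      rw [hnorm, hsq]
      have hk1 : (0:ℝ) < (k:ℝ)+1 := by positivity
      rw [← mul_div_assoc, le_div_iff₀ hk1]
      have := mul_le_mul_of_nonneg_left habs (by norm_num : (0:ℝ) ≤ 2)
      calc 1/((k:ℝ)+1) * (2 * |W k h|) * ((k:ℝ)+1)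
          = 2 * |W k h| := by field_simp
        _ ≤ 2 * Real.sqrt (2 * Real.log 2 * ((k:ℝ)+1)) := this
    · have t1 : Filter.Tendsto (fun k : ℕ => 2 * Real.log 2 / ((k:ℝ)+1))
          Filter.atTop (𝓝 0) := by
        have := tendsto_one_div_add_atTop_nhds_zero_nat.const_mul (2 * Real.log 2)
        simpa [div_eq_mul_inv] using this
      have t2 : Filter.Tendsto (fun k : ℕ => Real.sqrt (2 * Real.log 2 / ((k:ℝ)+1)))
          Filter.atTop (𝓝 0) := by
        have := (Real.continuous_sqrt.tendsto 0).comp t1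
        simpa [Function.comp_def] using this
      have := t2.const_mul 2
      simpa using this
  -- compactness
  have hbox : IsCompact (Set.pi Set.univ fun _ : Fin n => Set.Icc (-1:ℝ) 1) :=
    isCompact_univ_pi fun _ => isCompact_Icc
  have hxmem : ∀ k : ℕ, (fun i => th (∑ h, W k h * E h i))
      ∈ Set.pi Set.univ fun _ : Fin n => Set.Icc (-1:ℝ) 1 :=
    fun k i _ => ⟨(th_mem _).1.le, (th_mem _).2.le⟩
  obtain ⟨xl, hxl, φ, hφ, hconv⟩ := hbox.tendsto_subseq hxmem
  have hcoord : ∀ i, Filter.Tendsto (fun j => th (∑ h, W (φ j) h * E h i))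
      Filter.atTop (𝓝 (xl i)) := fun i => ((continuous_apply i).tendsto xl).comp hconv
  refine ⟨xl, fun i => hxl i (Set.mem_univ i), ?_, ?_⟩
  · intro h₀
    have l1 : Filter.Tendsto (fun j => (1/(n:ℝ)) * ∑ i, E h₀ i * th (∑ h, W (φ j) h * E h i))
        Filter.atTop (𝓝 ((1/(n:ℝ)) * ∑ i, E h₀ i * xl i)) :=
      ((tendsto_finset_sum _ fun i _ => (hcoord i).const_mul (E h₀ i))).const_mul _
    have l2 : Filter.Tendsto (fun j => (1/(n:ℝ)) * ∑ i, E h₀ i * th (∑ h, W (φ j) h * E h i))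
        Filter.atTop (𝓝 (b h₀)) := by
      have heq : (fun j => (1/(n:ℝ)) * ∑ i, E h₀ i * th (∑ h, W (φ j) h * E h i))
          = fun j => b h₀ - (1/((φ j : ℝ)+1)) * (2 * W (φ j) h₀) := by
        funext j; exact foc (φ j) h₀
      rw [heq]
      have h1 := (herr h₀).comp hφ.tendsto_atTop
      have h2 := (tendsto_const_nhds (x := b h₀) (f := Filter.atTop (α := ℕ))).sub h1
      simpa using h2
    exact tendsto_nhds_unique l1 l2
  · have hstep : ∀ j : ℕ, (⨅ w : Fin H → ℝ, slack E w b)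
        ≤ (1/(n:ℝ)) * ∑ i, 2 * ent (th (∑ h, W (φ j) h * E h i)) := fun j =>
      le_trans (ciInf_le (bddBelow_slack E b x0 hx0 hfe) (W (φ j))) (value (φ j))
    have hlim : Filter.Tendsto (fun j => (1/(n:ℝ)) * ∑ i, 2 * ent (th (∑ h, W (φ j) h * E h i)))
        Filter.atTop (𝓝 ((1/(n:ℝ)) * ∑ i, 2 * ent (xl i))) :=
      (tendsto_finset_sum _ fun i _ =>
        ((continuous_ent.tendsto _).comp (hcoord i)).const_mul 2).const_mul _
    exact ge_of_tendsto' hlim hstep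

lemma xent_nonneg {V : ℕ} (x xt : Fin V → ℝ) (hx : ∀ v, x v ∈ Set.Icc (-1:ℝ) 1)
    (hxt : ∀ v, xt v ∈ Set.Ioo (-1:ℝ) 1) : 0 ≤ xent x xt := by
  unfold xent
  refine Finset.sum_nonneg fun v _ => ?_
  obtain ⟨h1, h2⟩ := hx v
  obtain ⟨h3, h4⟩ := hxt v
  have l1 : 0 ≤ Real.log (2 / (1 + xt v)) :=
    Real.log_nonneg (by rw [le_div_iff₀ (by linarith)]; linarith)
  have l2 : 0 ≤ Real.log (2 / (1 - xt v)) :=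
    Real.log_nonneg (by rw [le_div_iff₀ (by linarith)]; linarith)
  have : (0:ℝ) ≤ (1 + x v) / 2 := by linarith
  have : (0:ℝ) ≤ (1 - x v) / 2 := by linarith
  positivity

lemma xent_le {V : ℕ} (x xt : Fin V → ℝ) (hx : ∀ v, x v ∈ Set.Icc (-1:ℝ) 1)
    (hxt : ∀ v, xt v ∈ Set.Ioo (-1:ℝ) 1) :
    xent x xt ≤ ∑ v, (Real.log (2 / (1 + xt v)) + Real.log (2 / (1 - xt v))) := by
  unfold xent
  refine Finset.sum_le_sum fun v _ => ?_
  obtain ⟨h1, h2⟩ := hx v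
  obtain ⟨h3, h4⟩ := hxt v
  have l1 : 0 ≤ Real.log (2 / (1 + xt v)) :=
    Real.log_nonneg (by rw [le_div_iff₀ (by linarith)]; linarith)
  have l2 : 0 ≤ Real.log (2 / (1 - xt v)) :=
    Real.log_nonneg (by rw [le_div_iff₀ (by linarith)]; linarith)
  have b1 : (1 + x v) / 2 * Real.log (2 / (1 + xt v)) ≤ 1 * Real.log (2 / (1 + xt v)) :=
    mul_le_mul_of_nonneg_right (by linarith) l1
  have b2 : (1 - x v) / 2 * Real.log (2 / (1 - xt v)) ≤ 1 * Real.log (2 / (1 - xt v)) :=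
    mul_le_mul_of_nonneg_right (by linarith) l2
  linarith

lemma loss_param {n V H : ℕ} (E : Fin H → Fin n → ℝ) (B : Fin V → Fin H → ℝ)
    (Wv : Fin V → Fin H → ℝ) (X : Fin V → Fin n → ℝ)
    (hXfe : ∀ v h, (1/(n:ℝ)) * ∑ i, E h i * X v i = B v h) :
    (1/(n:ℝ)) * ∑ i, xent (fun v => X v i) (fun v => th (∑ h, Wv v h * E h i))
      = (1/2) * ∑ v, slack E (Wv v) (B v) := by
  unfold xent
  rw [Finset.sum_comm]
  have step : ∀ v : Fin V,
      (∑ i, ((1 + X v i) / 2 * Real.log (2 / (1 + th (∑ h, Wv v h * E h i)))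
        + (1 - X v i) / 2 * Real.log (2 / (1 - th (∑ h, Wv v h * E h i)))))
      = ∑ i, (Psi (∑ h, Wv v h * E h i) - (∑ h, Wv v h * E h i) * X v i) / 2 :=
    fun v => Finset.sum_congr rfl fun i _ => by rw [xent_coord_id]; ring
  rw [Finset.sum_congr rfl fun v _ => step v, Finset.mul_sum, Finset.mul_sum]
  refine Finset.sum_congr rfl fun v _ => ?_
  rw [slack_feas_eq E (B v) (Wv v) (X v) (hXfe v), ← Finset.sum_div]
  ring

/-- The minimax value of the binary autoencoding game equals the sum of the
bitwise minimized slack functions. -/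
theorem minimax_reconstruction_loss
    (n V H : ℕ) (hn : 0 < n) (hV : 0 < V) (hH : 0 < H)
    (E : Fin H → Fin n → ℝ) (hE : ∀ h i, E h i ∈ Set.Icc (-1 : ℝ) 1)
    (B : Fin V → Fin H → ℝ)
    (hfeas : ∃ X : Fin V → Fin n → ℝ,
      (∀ v i, X v i ∈ Set.Icc (-1 : ℝ) 1) ∧
      ∀ v h, (1 / (n : ℝ)) * ∑ i, E h i * X v i = B v h) :
    (⨅ Xt : {Xt : Fin V → Fin n → ℝ // ∀ v i, Xt v i ∈ Set.Ioo (-1 : ℝ) 1},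
      ⨆ X : {X : Fin V → Fin n → ℝ //
          (∀ v i, X v i ∈ Set.Icc (-1 : ℝ) 1) ∧
          ∀ v h, (1 / (n : ℝ)) * ∑ i, E h i * X v i = B v h},
        (1 / (n : ℝ)) * ∑ i, xent (fun v => X.1 v i) (fun v => Xt.1 v i))
      = (1 / 2) * ∑ v, ⨅ w : Fin H → ℝ, slack E w (B v) := by
  obtain ⟨X0, hX0box, hX0fe⟩ := hfeas
  set F := {X : Fin V → Fin n → ℝ //
      (∀ v i, X v i ∈ Set.Icc (-1 : ℝ) 1) ∧
      ∀ v h, (1 / (n : ℝ)) * ∑ i, E h i * X v i = B v h} with hF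
  set T := {Xt : Fin V → Fin n → ℝ // ∀ v i, Xt v i ∈ Set.Ioo (-1 : ℝ) 1} with hT
  have hFne : Nonempty F := ⟨⟨X0, hX0box, hX0fe⟩⟩
  have hTne : Nonempty T := ⟨⟨fun _ _ => 0, fun _ _ => by norm_num⟩⟩
  set loss : F → T → ℝ := fun X Xt =>
    (1 / (n : ℝ)) * ∑ i, xent (fun v => X.1 v i) (fun v => Xt.1 v i) with hloss
  -- upper bound over X for fixed Xt
  have hbddA : ∀ Xt : T, BddAbove (Set.range fun X : F => loss X Xt) := by
    intro Xt
    refine ⟨(1 / (n : ℝ)) * ∑ i, ∑ v, (Real.log (2 / (1 + Xt.1 v i))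
      + Real.log (2 / (1 - Xt.1 v i))), fun y hy => ?_⟩
    obtain ⟨X, rfl⟩ := hy
    refine mul_le_mul_of_nonneg_left (Finset.sum_le_sum fun i _ => ?_) (by positivity)
    exact xent_le _ _ (fun v => X.2.1 v i) (fun v => Xt.2 v i)
  have hloss_nonneg : ∀ (X : F) (Xt : T), 0 ≤ loss X Xt := by
    intro X Xt
    refine mul_nonneg (by positivity) (Finset.sum_nonneg fun i _ => ?_)
    exact xent_nonneg _ _ (fun v => X.2.1 v i) (fun v => Xt.2 v i)
  have hbddB : BddBelow (Set.range fun Xt : T => ⨆ X : F, loss X Xt) := by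
    refine ⟨0, fun y hy => ?_⟩
    obtain ⟨Xt, rfl⟩ := hy
    calc (0:ℝ) ≤ loss hFne.some Xt := hloss_nonneg _ _
    _ ≤ ⨆ X : F, loss X Xt := le_ciSup (hbddA Xt) _
  refine le_antisymm ?_ ?_
  · -- LHS ≤ RHS
    refine le_of_forall_pos_le_add fun ε hε => ?_
    have hVpos : (0:ℝ) < V := by exact_mod_cast hV
    have hεV : (0:ℝ) < 2 * ε / V := by positivity
    have hWv : ∀ v : Fin V, ∃ w : Fin H → ℝ,
        slack E w (B v) < (⨅ w : Fin H → ℝ, slack E w (B v)) + 2 * ε / V := by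
      intro v
      refine exists_lt_of_ciInf_lt ?_
      exact lt_add_of_pos_right _ hεV
    choose Wv hWvlt using hWv
    set Xt : T := ⟨fun v i => th (∑ h, Wv v h * E h i), fun v i => th_mem _⟩ with hXt
    have hS : (⨆ X : F, loss X Xt) ≤ (1 / 2) * ∑ v, (⨅ w : Fin H → ℝ, slack E w (B v)) + ε := by
      refine ciSup_le fun X => ?_
      have := loss_param E B Wv X.1 X.2.2
      have heq : loss X Xt = (1/2) * ∑ v, slack E (Wv v) (B v) := this
      rw [heq]
      have hsum : ∑ v, slack E (Wv v) (B v)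
          ≤ ∑ v, ((⨅ w : Fin H → ℝ, slack E w (B v)) + 2 * ε / V) :=
        Finset.sum_le_sum fun v _ => (hWvlt v).le
      have hconst : ∑ _v : Fin V, (2 * ε / V : ℝ) = 2 * ε := by
        rw [Finset.sum_const, Finset.card_univ, Fintype.card_fin, nsmul_eq_mul]
        field_simp
      rw [Finset.sum_add_distrib, hconst] at hsum
      linarith
    calc (⨅ Xt : T, ⨆ X : F, loss X Xt) ≤ ⨆ X : F, loss X Xt := ciInf_le hbddB Xt
    _ ≤ _ := hS
  · -- RHS ≤ LHS
    refine le_ciInf fun Xt => ?_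
    have hx := fun v => crux hn E (B v) (X0 v) (hX0box v) (hX0fe v)
    choose xv hxbox hxfe hxval using hx
    set X : F := ⟨fun v i => xv v i, fun v i => hxbox v i, fun v h => hxfe v h⟩ with hX
    have key : (1 / 2) * ∑ v, (⨅ w : Fin H → ℝ, slack E w (B v)) ≤ loss X Xt := by
      have per : ∀ v : Fin V, (1/2) * (⨅ w : Fin H → ℝ, slack E w (B v))
          ≤ (1/(n:ℝ)) * ∑ i, ent (xv v i) := by
        intro v
        have h1 := hxval v
        have h2 : ∑ i, 2 * ent (xv v i) = 2 * ∑ i, ent (xv v i) := by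
          rw [Finset.mul_sum]
        rw [h2] at h1
        nlinarith [h1]
      have hG : ∀ (i : Fin n) (v : Fin V),
          ent (xv v i) ≤ (1 + xv v i) / 2 * Real.log (2 / (1 + Xt.1 v i))
            + (1 - xv v i) / 2 * Real.log (2 / (1 - Xt.1 v i)) :=
        fun i v => gibbs_coord (hxbox v i) (Xt.2 v i)
      calc (1 / 2) * ∑ v, (⨅ w : Fin H → ℝ, slack E w (B v))
          = ∑ v, (1/2) * (⨅ w : Fin H → ℝ, slack E w (B v)) := by rw [Finset.mul_sum]
        _ ≤ ∑ v, (1/(n:ℝ)) * ∑ i, ent (xv v i) := Finset.sum_le_sum fun v _ => per v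
        _ = (1/(n:ℝ)) * ∑ v, ∑ i, ent (xv v i) := by rw [Finset.mul_sum]
        _ = (1/(n:ℝ)) * ∑ i, ∑ v, ent (xv v i) := by rw [Finset.sum_comm]
        _ ≤ (1/(n:ℝ)) * ∑ i, xent (fun v => X.1 v i) (fun v => Xt.1 v i) := by
            refine mul_le_mul_of_nonneg_left (Finset.sum_le_sum fun i _ => ?_) (by positivity)
            unfold xent
            exact Finset.sum_le_sum fun v _ => hG i v
        _ = loss X Xt := rfl
    calc (1 / 2) * ∑ v, (⨅ w : Fin H → ℝ, slack E w (B v)) ≤ loss X Xt := key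
    _ ≤ ⨆ X : F, loss X Xt := le_ciSup (hbddA Xt) X
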